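/- Define H(w) = (f/2^w)·θ·exp(-n/(r·2^w)) for natural w, with real f, θ, r, n > 0. Let u be the largest level with n/2^u ≥ r/8 (so r/8 ≤ n/2^u < r/4). Then for every w ≥ u+1, H(w)/H(w+1) ≥ 2·e^{-1/16} ≥ 7/4, and consequently Σ_{w ≥ u+1} H(w) ≤ (7/3)·H(u+1). -/

import Mathlib

/-- Geometric decay of `H(w) = (f/2^w)·θ·exp(-n/(r·2^w))` above level `u`,
where `r/8 ≤ n/2^u < r/4`: for `w ≥ u+1`, `H(w)/H(w+1) ≥ 2e^{-1/16} ≥ 7/4`,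
and `∑_{w ≥ u+1} H(w) ≤ (7/3)·H(u+1)`. -/
theorem stmt_5 (f θ r n : ℝ) (hf : 0 < f) (hθ : 0 < θ) (hr : 0 < r) (hn : 0 < n)
    (H : ℕ → ℝ) (hH : ∀ w, H w = f / 2 ^ w * θ * Real.exp (-(n / (r * 2 ^ w))))
    (u : ℕ) (h1 : r / 8 ≤ n / 2 ^ u) (h2 : n / 2 ^ u < r / 4) :
    (∀ w : ℕ, u + 1 ≤ w →
        (7 / 4 : ℝ) ≤ 2 * Real.exp (-(1 / 16)) ∧
          2 * Real.exp (-(1 / 16)) ≤ H w / H (w + 1)) ∧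
      ∑' k : ℕ, H (u + 1 + k) ≤ 7 / 3 * H (u + 1) := by
  have h2pos : ∀ w : ℕ, (0:ℝ) < 2 ^ w := fun w => by positivity
  have hHpos : ∀ w, 0 < H w := by
    intro w; rw [hH]; positivity
  have hexp : (7 / 4 : ℝ) ≤ 2 * Real.exp (-(1 / 16)) := by
    have := Real.add_one_le_exp (-(1/16) : ℝ)
    linarith
  have hn4 : n < r / 4 * 2 ^ u := (div_lt_iff₀ (h2pos u)).mp h2
  have hratio : ∀ w : ℕ, u + 1 ≤ w →
      2 * Real.exp (-(1/16)) ≤ H w / H (w + 1) := by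
    intro w hw
    set c := n / (r * 2 ^ (w+1)) with hc
    have hcpos : 0 < c := by positivity
    have hkey : H w = 2 * Real.exp (-c) * H (w+1) := by
      rw [hH, hH]
      have hcc : n / (r * 2 ^ w) = c + c := by
        rw [hc, pow_succ]; field_simp; ring
      rw [hcc, ← hc, neg_add, Real.exp_add, pow_succ]
      field_simp
    have hHdiv : H w / H (w+1) = 2 * Real.exp (-c) := by
      rw [hkey, mul_div_assoc, div_self (hHpos (w+1)).ne', mul_one]
    rw [hHdiv]
    have hcle : c ≤ 1/16 := by
      have hpow : (2:ℝ)^(u+2) ≤ 2^(w+1) := pow_le_pow_right₀ (by norm_num) (by omega)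
      have hd : r * 2^(u+2) ≤ r * 2^(w+1) := by nlinarith
      have hle : n / (r * 2 ^ (w+1)) ≤ n / (r * 2 ^ (u+2)) :=
        div_le_div_of_nonneg_left hn.le (by positivity) hd
      have hlt : n / (r * 2 ^ (u+2)) < 1/16 := by
        rw [div_lt_iff₀ (by positivity)]
        have heq : (1:ℝ)/16 * (r * 2 ^ (u+2)) = r/4 * 2^u := by
          rw [pow_succ, pow_succ]; ring
        rw [heq]; exact hn4
      rw [hc]; linarith
    have hmon : Real.exp (-(1/16)) ≤ Real.exp (-c) := Real.exp_le_exp.mpr (by linarith)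
    linarith
  refine ⟨fun w hw => ⟨hexp, hratio w hw⟩, ?_⟩
  have hstep : ∀ w : ℕ, u + 1 ≤ w → H (w+1) ≤ 4/7 * H w := by
    intro w hw
    have h74 : (7/4 : ℝ) ≤ H w / H (w+1) := le_trans hexp (hratio w hw)
    rw [le_div_iff₀ (hHpos (w+1))] at h74
    linarith
  have hgeo : ∀ k : ℕ, H (u + 1 + k) ≤ (4/7:ℝ)^k * H (u+1) := by
    intro k
    induction k with
    | zero => simp
    | succ k ih =>
      have := hstep (u+1+k) (by omega)
      have h47 : (0:ℝ) ≤ 4/7 := by norm_num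
      calc H (u + 1 + (k+1)) = H ((u+1+k) + 1) := by ring_nf
        _ ≤ 4/7 * H (u+1+k) := this
        _ ≤ 4/7 * ((4/7:ℝ)^k * H (u+1)) := by nlinarith [(hHpos (u+1+k)).le]
        _ = (4/7:ℝ)^(k+1) * H (u+1) := by ring
  have hsummable : Summable (fun k : ℕ => (4/7:ℝ)^k * H (u+1)) :=
    (summable_geometric_of_lt_one (by norm_num) (by norm_num)).mul_right _
  have hsum : Summable (fun k => H (u+1+k)) :=
    Summable.of_nonneg_of_le (fun k => (hHpos _).le) hgeo hsummable
  calc ∑' k : ℕ, H (u + 1 + k) ≤ ∑' k : ℕ, (4/7:ℝ)^k * H (u+1) :=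
        Summable.tsum_le_tsum hgeo hsum hsummable
    _ = (∑' k : ℕ, (4/7:ℝ)^k) * H (u+1) := tsum_mul_right
    _ = 7/3 * H (u+1) := by
        rw [tsum_geometric_of_lt_one (by norm_num) (by norm_num)]; norm_num
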